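/- Under the stated assumptions, for any parameter ζ with R − ζ·1 and L − ζ·1 invertible, the shifted tau-function σ satisfies σ[ζ]/τ = ⟨a[ζ]| F |β⟩ = ⟨a| F (R−ζ)⁻¹ |β⟩; that is, τ[ζ]·⟨a|(R−ζ)⁻¹ F[ζ] |β⟩ = τ·⟨a|(R−ζ)⁻¹ F |β⟩ = τ·⟨a| F (R−ζ)⁻¹ |β⟩, where F[ζ] = (1 + B(L−ζ) A(R−ζ)⁻¹)⁻¹ and τ[ζ] = det(1 + A(R−ζ)⁻¹ B(L−ζ)). -/

import Mathlib

open Matrix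

noncomputable section

variable {n : ℕ}

private abbrev MC (n : ℕ) := Matrix (Fin n) (Fin n) ℂ

private lemma mul_vecMulVec' (M : MC n) (u v : Fin n → ℂ) :
    M * vecMulVec u v = vecMulVec (M *ᵥ u) v := by
  ext i j
  simp [vecMulVec_apply, mul_apply, mulVec, dotProduct, Finset.sum_mul, mul_assoc]

private lemma vecMulVec_mul' (M : MC n) (u v : Fin n → ℂ) :
    vecMulVec u v * M = vecMulVec u (vecMul v M) := by
  ext i j
  simp [vecMulVec_apply, mul_apply, vecMul, dotProduct, Finset.mul_sum, mul_assoc]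

private lemma vecMulVec_mul_vecMulVec' (u v u' v' : Fin n → ℂ) :
    vecMulVec u v * vecMulVec u' v' = (v ⬝ᵥ u') • vecMulVec u v' := by
  ext i j
  simp [vecMulVec_apply, mul_apply, dotProduct, Finset.mul_sum, Finset.sum_mul]
  ring_nf
  rw [Finset.sum_congr rfl]
  intros; ring

private lemma vecMul_vecMulVec' (x u v : Fin n → ℂ) :
    vecMul x (vecMulVec u v) = (x ⬝ᵥ u) • v := by
  ext j
  simp [vecMulVec_apply, vecMul, dotProduct, Finset.sum_mul, mul_assoc]

private lemma vecMul_smulM (v : Fin n → ℂ) (c : ℂ) (M : MC n) :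
    vecMul v (c • M) = c • vecMul v M := by
  ext j
  simp [vecMul, dotProduct, Finset.mul_sum, mul_assoc, mul_left_comm]

private lemma push_through (X Y : MC n) (h1 : IsUnit (1 + X * Y)) (h2 : IsUnit (1 + Y * X)) :
    (1 + X * Y)⁻¹ * X = X * (1 + Y * X)⁻¹ := by
  have h : (1 + X * Y) * X = X * (1 + Y * X) := by noncomm_ring
  have d1 : IsUnit (1 + X * Y).det := (isUnit_iff_isUnit_det _).mp h1
  have d2 : IsUnit (1 + Y * X).det := (isUnit_iff_isUnit_det _).mp h2
  calc (1 + X * Y)⁻¹ * X = (1 + X * Y)⁻¹ * (X * (1 + Y * X)) * (1 + Y * X)⁻¹ := by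
        rw [Matrix.mul_assoc, Matrix.mul_assoc, Matrix.mul_nonsing_inv _ d2, Matrix.mul_one]
    _ = X * (1 + Y * X)⁻¹ := by
        rw [← h, ← Matrix.mul_assoc, Matrix.nonsing_inv_mul _ d1, Matrix.one_mul]

private lemma det_add_vecMulVec' (K : MC n) (hK : IsUnit K.det) (u v : Fin n → ℂ) :
    (K + vecMulVec u v).det = K.det * (1 + vecMul v K⁻¹ ⬝ᵥ u) := by
  rw [vecMulVec_eq Unit, Matrix.det_add_replicateCol_mul_replicateRow hK]
  congr 1
  rw [det_unique]
  simp [mul_apply, Matrix.replicateRow, Matrix.replicateCol, vecMul, dotProduct, Finset.sum_mul, Finset.mul_sum]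

private lemma key_sum (w a β : Fin n → ℂ) (F : MC n)
    (hsym : ∀ j k, a j * F j k * β k = a k * F k j * β j) :
    vecMul a (diagonal w * F) ⬝ᵥ β = vecMul a (F * diagonal w) ⬝ᵥ β := by
  have L : ∀ (M : MC n), vecMul a M ⬝ᵥ β = ∑ k, ∑ j, a j * M j k * β k := by
    intro M; simp [vecMul, dotProduct, Finset.sum_mul]
  rw [L, L]
  have step : ∀ k j, a j * (diagonal w * F) j k * β k = w j * (a k * F k j * β j) := by
    intro k j; rw [diagonal_mul]; linear_combination w j * hsym j k
  simp_rw [step]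
  rw [Finset.sum_comm]
  refine Finset.sum_congr rfl fun j _ => Finset.sum_congr rfl fun k _ => ?_
  rw [mul_diagonal]; ring

/-- `σ[ζ]/τ = ⟨a[ζ]|F|β⟩ = ⟨a|F(R−ζ)⁻¹|β⟩`, i.e.
`τ[ζ]·⟨a|(R−ζ)⁻¹F[ζ]|β⟩ = τ·⟨a|(R−ζ)⁻¹F|β⟩ = τ·⟨a|F(R−ζ)⁻¹|β⟩`, where
`F[ζ] = (1 + B(L−ζ)A(R−ζ)⁻¹)⁻¹` and `τ[ζ] = det(1 + A(R−ζ)⁻¹B(L−ζ))`. -/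
theorem statement2 {n : ℕ} (hn : 1 ≤ n) (l r : Fin n → ℂ)
    (hlr : ∀ j k, l j ≠ r k) (α β a b : Fin n → ℂ)
    (A B : Matrix (Fin n) (Fin n) ℂ)
    (hA : Matrix.diagonal l * A - A * Matrix.diagonal r = Matrix.vecMulVec α a)
    (hB : Matrix.diagonal r * B - B * Matrix.diagonal l = Matrix.vecMulVec β b)
    (ζ : ℂ)
    (hζR : IsUnit (Matrix.diagonal r - ζ • (1 : Matrix (Fin n) (Fin n) ℂ)))
    (hζL : IsUnit (Matrix.diagonal l - ζ • (1 : Matrix (Fin n) (Fin n) ℂ)))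
    (hinv : IsUnit (1 + A * B))
    (hinv' : IsUnit (1 + A * (Matrix.diagonal r - ζ • 1)⁻¹ *
        (B * (Matrix.diagonal l - ζ • 1)))) :
    (1 + A * (Matrix.diagonal r - ζ • 1)⁻¹ * (B * (Matrix.diagonal l - ζ • 1))).det *
        (Matrix.vecMul a ((Matrix.diagonal r - ζ • 1)⁻¹ *
          (1 + B * (Matrix.diagonal l - ζ • 1) * (A * (Matrix.diagonal r - ζ • 1)⁻¹))⁻¹) ⬝ᵥ β)
      = (1 + A * B).det *
        (Matrix.vecMul a ((Matrix.diagonal r - ζ • 1)⁻¹ * (1 + B * A)⁻¹) ⬝ᵥ β) ∧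
    (1 + A * B).det *
        (Matrix.vecMul a ((Matrix.diagonal r - ζ • 1)⁻¹ * (1 + B * A)⁻¹) ⬝ᵥ β)
      = (1 + A * B).det *
        (Matrix.vecMul a ((1 + B * A)⁻¹ * (Matrix.diagonal r - ζ • 1)⁻¹) ⬝ᵥ β) := by
  set Rz : MC n := Matrix.diagonal r - ζ • 1 with hRzdef
  set Lz : MC n := Matrix.diagonal l - ζ • 1 with hLzdef
  set K : MC n := 1 + B * A with hKdef
  set F : MC n := K⁻¹ with hFdef
  clear_value F
  clear_value Rz Lz K
  have hRzdet : IsUnit Rz.det := (isUnit_iff_isUnit_det _).mp hζR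
  have hKdet : IsUnit K.det := by
    rw [hKdef, Matrix.det_one_add_mul_comm]; exact (isUnit_iff_isUnit_det _).mp hinv
  have hKF : K * F = 1 := by rw [hFdef]; exact Matrix.mul_nonsing_inv _ hKdet
  have hFK : F * K = 1 := by rw [hFdef]; exact Matrix.nonsing_inv_mul _ hKdet
  -- Sylvester shifted
  have hLzA : Lz * A = vecMulVec α a + A * Rz := by
    have h' : Lz * A - A * Rz = vecMulVec α a := by
      rw [hLzdef, hRzdef, Matrix.sub_mul, Matrix.mul_sub, Matrix.smul_mul, Matrix.mul_smul,
        Matrix.one_mul, Matrix.mul_one]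
      rw [← hA]; abel
    rw [← h']; abel
  set w : Fin n → ℂ := B *ᵥ α with hwdef
  set v : Fin n → ℂ := vecMul a Rz⁻¹ with hvdef
  set x : ℂ := vecMul v F ⬝ᵥ w with hxdef
  set z : ℂ := vecMul v F ⬝ᵥ β with hzdef
  have hK'c : 1 + B * Lz * (A * Rz⁻¹) = K + vecMulVec w v := by
    have : B * Lz * (A * Rz⁻¹) = B * (Lz * A) * Rz⁻¹ := by
      rw [Matrix.mul_assoc, Matrix.mul_assoc, Matrix.mul_assoc]
    rw [this, hLzA, Matrix.mul_add, Matrix.add_mul, mul_vecMulVec', vecMulVec_mul',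
      ← Matrix.mul_assoc B A Rz, Matrix.mul_assoc (B * A) Rz Rz⁻¹,
      Matrix.mul_nonsing_inv _ hRzdet, Matrix.mul_one, hKdef, hwdef, hvdef]
    abel
  have hdetK' : (1 + B * Lz * (A * Rz⁻¹)).det = K.det * (1 + x) := by
    rw [hK'c, det_add_vecMulVec' K hKdet w v, hxdef, hFdef]
  have hτ' : (1 + A * Rz⁻¹ * (B * Lz)).det = K.det * (1 + x) := by
    rw [Matrix.det_one_add_mul_comm, ← hdetK', Matrix.mul_assoc]
  have hx1 : (1 : ℂ) + x ≠ 0 := by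
    have hu : IsUnit (1 + A * Rz⁻¹ * (B * Lz)).det := (isUnit_iff_isUnit_det _).mp hinv'
    rw [hτ'] at hu
    intro h0
    rw [h0, mul_zero] at hu
    exact (not_isUnit_zero : ¬ IsUnit (0 : ℂ)) hu
  set c : ℂ := (1 + x)⁻¹ with hcdef
  have hcx : c * (1 + x) = 1 := inv_mul_cancel₀ hx1
  set F' : MC n := F - c • vecMulVec (F *ᵥ w) (vecMul v F) with hF'def
  have hinvK' : (1 + B * Lz * (A * Rz⁻¹))⁻¹ = F' := by
    apply Matrix.inv_eq_right_inv
    rw [hK'c, hF'def]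
    set N : MC n := vecMulVec (F *ᵥ w) (vecMul v F) with hNdef
    set P : MC n := vecMulVec w (vecMul v F) with hPdef
    have e1 : K * N = P := by
      rw [hNdef, hPdef, mul_vecMulVec', Matrix.mulVec_mulVec, hKF, Matrix.one_mulVec]
    have e2 : vecMulVec w v * F = P := by rw [hPdef, vecMulVec_mul']
    have e3 : vecMulVec w v * N = x • P := by
      rw [hNdef, hPdef, vecMulVec_mul_vecMulVec', Matrix.dotProduct_mulVec, ← hxdef]
    have expand : (K + vecMulVec w v) * (F - c • N)
        = (K * F + vecMulVec w v * F) - (c • (K * N) + c • (vecMulVec w v * N)) := by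
      rw [Matrix.add_mul, Matrix.mul_sub, Matrix.mul_sub, Matrix.mul_smul, Matrix.mul_smul]
      abel
    rw [expand, hKF, e1, e2, e3, smul_smul]
    have h0 : (1 : ℂ) - c - c * x = 0 := by linear_combination -hcx
    have hP : P - (c • P + (c * x) • P) = 0 := by
      have : ((1 : ℂ) - c - c * x) • P = P - (c • P + (c * x) • P) := by module
      rw [← this, h0, zero_smul]
    calc 1 + P - (c • P + (c * x) • P) = 1 + (P - (c • P + (c * x) • P)) := by abel
      _ = 1 := by rw [hP, add_zero]
  -- final assembly
  have hKABdet : (1 + A * B).det = K.det := by rw [hKdef]; exact Matrix.det_one_add_mul_comm A B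
  have hzRHS : Matrix.vecMul a (Rz⁻¹ * F) ⬝ᵥ β = z := by
    rw [← Matrix.vecMul_vecMul, ← hvdef, hzdef]
  constructor
  · rw [hτ', hinvK', hKABdet, ← Matrix.vecMul_vecMul, ← hvdef, hzRHS]
    have hq : Matrix.vecMul v F' ⬝ᵥ β = z - c * (x * z) := by
      rw [hF'def, Matrix.vecMul_sub, vecMul_smulM, vecMul_vecMulVec',
        Matrix.dotProduct_mulVec, ← hxdef, sub_dotProduct, smul_dotProduct,
        smul_dotProduct, smul_eq_mul, smul_eq_mul, hzdef]
    rw [hq]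
    have : (1 + x) * (z - c * (x * z)) = z := by
      rw [hcdef]; field_simp; ring
    linear_combination K.det * this
  · -- claim 2 : symmetry
    have hAe : ∀ j k, A j k = α j * a k * (l j - r k)⁻¹ := by
      intro j k
      have h : (Matrix.diagonal l * A - A * Matrix.diagonal r) j k = vecMulVec α a j k := by
        rw [hA]
      simp only [Matrix.sub_apply, Matrix.diagonal_mul, Matrix.mul_diagonal,
        vecMulVec_apply] at h
      have hne : l j - r k ≠ 0 := sub_ne_zero.mpr (hlr j k)
      field_simp
      linear_combination h
    have hBe : ∀ j k, B j k = β j * b k * (r j - l k)⁻¹ := by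
      intro j k
      have h : (Matrix.diagonal r * B - B * Matrix.diagonal l) j k = vecMulVec β b j k := by
        rw [hB]
      simp only [Matrix.sub_apply, Matrix.diagonal_mul, Matrix.mul_diagonal,
        vecMulVec_apply] at h
      have hne : r j - l k ≠ 0 := sub_ne_zero.mpr (Ne.symm (hlr k j))
      field_simp
      linear_combination h
    set S : MC n := Matrix.of (fun j k => ∑ m, b m * α m * ((r j - l m)⁻¹ * (l m - r k)⁻¹))
      with hSdef
    have hST : Sᵀ = S := by
      ext j k
      simp only [Matrix.transpose_apply, hSdef, Matrix.of_apply]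
      refine Finset.sum_congr rfl fun m _ => ?_
      rw [show l m - r j = -(r j - l m) by ring, show l m - r k = -(r k - l m) by ring]
      simp only [inv_neg]
      ring
    have hBAe : B * A = Matrix.diagonal β * (S * Matrix.diagonal a) := by
      ext j k
      rw [Matrix.mul_apply, Matrix.diagonal_mul, Matrix.mul_diagonal, hSdef]
      simp only [Matrix.of_apply]
      rw [Finset.sum_mul, Finset.mul_sum]
      refine Finset.sum_congr rfl fun m _ => ?_
      rw [hBe j m, hAe m k]
      ring
    have u1 : IsUnit (1 + Matrix.diagonal β * (S * Matrix.diagonal a)) := by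
      rw [← hBAe, ← hKdef]
      exact (Matrix.isUnit_iff_isUnit_det _).mpr hKdet
    have u2 : IsUnit (1 + S * Matrix.diagonal a * Matrix.diagonal β) := by
      rw [Matrix.isUnit_iff_isUnit_det, Matrix.det_one_add_mul_comm]
      rw [← Matrix.isUnit_iff_isUnit_det]
      exact u1
    have pt1 : (1 + Matrix.diagonal β * (S * Matrix.diagonal a))⁻¹ * Matrix.diagonal β
        = Matrix.diagonal β * (1 + S * Matrix.diagonal a * Matrix.diagonal β)⁻¹ := by
      exact push_through (Matrix.diagonal β) (S * Matrix.diagonal a) u1 u2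
    set du : Fin n → ℂ := fun i => a i * β i with hdudef
    have hdd : Matrix.diagonal a * Matrix.diagonal β = Matrix.diagonal du := by
      rw [Matrix.diagonal_mul_diagonal]
    have hSDu : S * Matrix.diagonal a * Matrix.diagonal β = S * Matrix.diagonal du := by
      rw [Matrix.mul_assoc, hdd]
    have u3 : IsUnit (1 + S * Matrix.diagonal du) := by rw [← hSDu]; exact u2
    have u4 : IsUnit (1 + Matrix.diagonal du * S) := by
      rw [Matrix.isUnit_iff_isUnit_det, Matrix.det_one_add_mul_comm,
        ← Matrix.isUnit_iff_isUnit_det]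
      exact u3
    have pt2 : (1 + Matrix.diagonal du * S)⁻¹ * Matrix.diagonal du
        = Matrix.diagonal du * (1 + S * Matrix.diagonal du)⁻¹ :=
      push_through (Matrix.diagonal du) S u4 u3
    have hG : Matrix.diagonal a * F * Matrix.diagonal β
        = Matrix.diagonal du * (1 + S * Matrix.diagonal du)⁻¹ := by
      rw [Matrix.mul_assoc, hFdef, show K = 1 + Matrix.diagonal β * (S * Matrix.diagonal a) from
        by rw [hKdef, hBAe], pt1, ← Matrix.mul_assoc, hdd, hSDu]
    have hGsym : (Matrix.diagonal a * F * Matrix.diagonal β)ᵀ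
        = Matrix.diagonal a * F * Matrix.diagonal β := by
      rw [hG, Matrix.transpose_mul, Matrix.transpose_nonsing_inv, Matrix.transpose_add,
        Matrix.transpose_one, Matrix.transpose_mul, Matrix.diagonal_transpose, hST]
      exact pt2
    have hsym : ∀ j k, a j * F j k * β k = a k * F k j * β j := by
      intro j k
      have h : (Matrix.diagonal a * F * Matrix.diagonal β)ᵀ j k
          = (Matrix.diagonal a * F * Matrix.diagonal β) j k := by rw [hGsym]
      simp only [Matrix.transpose_apply, Matrix.mul_diagonal, Matrix.diagonal_mul] at h
      linear_combination -h
    -- rewrite Rz⁻¹ as a diagonal matrix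
    have hRzdiag : Rz = Matrix.diagonal (fun i => r i - ζ) := by
      rw [hRzdef]
      ext i j
      by_cases h : i = j <;>
        simp [Matrix.sub_apply, Matrix.smul_apply, Matrix.one_apply, Matrix.diagonal, h]
    have hne : ∀ i, r i - ζ ≠ 0 := by
      have hd : IsUnit (Matrix.diagonal (fun i => r i - ζ)).det := by
        rw [← hRzdiag]; exact hRzdet
      rw [Matrix.det_diagonal, isUnit_iff_ne_zero] at hd
      intro i h0
      exact hd (Finset.prod_eq_zero (Finset.mem_univ i) h0)
    have hRzinv : Rz⁻¹ = Matrix.diagonal (fun i => (r i - ζ)⁻¹) := by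
      rw [hRzdiag]
      apply Matrix.inv_eq_right_inv
      rw [Matrix.diagonal_mul_diagonal]
      ext i j
      rcases eq_or_ne i j with h | h
      · subst h
        simp [Matrix.diagonal_apply_eq, Matrix.one_apply_eq, mul_inv_cancel₀ (hne i)]
      · simp [Matrix.diagonal_apply_ne _ h, Matrix.one_apply_ne h]
    rw [hRzinv]
    congr 1
    exact key_sum _ a β F hsym
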